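/- For all integers h, j, m with j ≥ |h| and |m| ≤ j, the spin-weighted spherical harmonic of spin weight −h satisfies the total angular momentum eigenvalue equation: for all (θ, φ) ∈ (0, π) × ℝ, J'²_h (_{−h}Y_{jm})(θ,φ) = j(j+1) (_{−h}Y_{jm})(θ,φ), where J'²_h = −[∂²_θ + (cos θ/sin θ)∂_θ + (1/sin²θ)∂²_φ] + (2ih cos θ/sin²θ)∂_φ + h²/sin²θ. -/

import Mathlib

open scoped BigOperators

/-- The spin-weighted spherical harmonic `ₛY_{jm}(θ,φ)` of spin weight `s`, for integers
`s, j, m` (intended for `j ≥ |s|`; defined to be `0` when `|m| > j`), given by the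
explicit Goldberg et al. formula
`ₛY_{jm}(θ,φ) = [ (j+m)! (j−m)! (2j+1) / (4π (j+s)! (j−s)!) ]^{1/2} (sin(θ/2))^{2j}
  Σ_q C(j−s, q) C(j+s, q+s−m) (−1)^{j−q−s} e^{imφ} (cot(θ/2))^{2q+s−m}`,
the sum ranging over `max(0, m−s) ≤ q ≤ min(j−s, j+m)`. -/
noncomputable def swsh (s j m : ℤ) (θ φ : ℝ) : ℂ :=
  if |m| > j then 0 else
    (Real.sqrt ((((j + m).toNat.factorial : ℝ) * ((j - m).toNat.factorial : ℝ) *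
          ((2 * j + 1 : ℤ) : ℝ)) /
        (4 * Real.pi * ((j + s).toNat.factorial : ℝ) * ((j - s).toNat.factorial : ℝ))) : ℂ) *
      ((Real.sin (θ / 2) : ℂ) ^ (2 * j).toNat) *
      ∑ q ∈ Finset.Icc (max 0 (m - s)) (min (j - s) (j + m)),
        (((j - s).toNat.choose q.toNat : ℕ) : ℂ) *
          (((j + s).toNat.choose (q + s - m).toNat : ℕ) : ℂ) *
          (-1 : ℂ) ^ (j - q - s) *
          Complex.exp (Complex.I * (m : ℂ) * (φ : ℂ)) *
          ((Real.cos (θ / 2) / Real.sin (θ / 2) : ℝ) : ℂ) ^ (2 * q + s - m).toNat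


noncomputable def Pc (a b : ℕ) (t : ℝ) : ℂ :=
  (Real.sin (t/2) : ℂ) ^ a * (Real.cos (t/2) : ℂ) ^ b

noncomputable def Pc1 (a b : ℕ) (t : ℝ) : ℂ :=
  ((a:ℂ) * Pc (a-1) (b+1) t - (b:ℂ) * Pc (a+1) (b-1) t) / 2

noncomputable def Pc2 (a b : ℕ) (t : ℝ) : ℂ :=
  ((a:ℂ) * Pc1 (a-1) (b+1) t - (b:ℂ) * Pc1 (a+1) (b-1) t) / 2

lemma HasDerivAt.cpow_nat {f : ℝ → ℂ} {f' : ℂ} {x : ℝ} (hf : HasDerivAt f f' x) (n : ℕ) :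
    HasDerivAt (fun y => f y ^ n) ((n : ℂ) * f x ^ (n - 1) * f') x := by
  induction n with
  | zero => simpa using hasDerivAt_const x (1:ℂ)
  | succ n ih =>
    have h := ih.mul hf
    have : HasDerivAt (fun y => f y ^ n * f y)
        ((n : ℂ) * f x ^ (n-1) * f' * f x + f x ^ n * f') x := h
    have he : ∀ y, f y ^ n * f y = f y ^ (n+1) := fun y => (pow_succ (f y) n).symm
    simp only [he] at this
    convert this using 1
    cases n with
    | zero => simp
    | succ k => push_cast; ring

lemma hasDerivAt_sin_half (t : ℝ) :
    HasDerivAt (fun t : ℝ => ((Real.sin (t/2) : ℝ) : ℂ)) ((Real.cos (t/2) : ℂ)/2) t := by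
  have h1 : HasDerivAt (fun t : ℝ => t/2) (1/2) t := (hasDerivAt_id t).div_const 2
  have h2 : HasDerivAt (fun t : ℝ => Real.sin (t/2)) (Real.cos (t/2) * (1/2)) t :=
    by have := (Real.hasDerivAt_sin (t/2)).comp t h1; exact this
  have h3 := h2.ofReal_comp
  convert h3 using 1
  push_cast; ring

lemma hasDerivAt_cos_half (t : ℝ) :
    HasDerivAt (fun t : ℝ => ((Real.cos (t/2) : ℝ) : ℂ)) (-(Real.sin (t/2) : ℂ)/2) t := by
  have h1 : HasDerivAt (fun t : ℝ => t/2) (1/2) t := (hasDerivAt_id t).div_const 2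
  have h2 : HasDerivAt (fun t : ℝ => Real.cos (t/2)) (-Real.sin (t/2) * (1/2)) t :=
    by have := (Real.hasDerivAt_cos (t/2)).comp t h1; exact this
  have h3 := h2.ofReal_comp
  convert h3 using 1
  push_cast; ring

lemma hasDerivAt_Pc (a b : ℕ) (t : ℝ) : HasDerivAt (fun t => Pc a b t) (Pc1 a b t) t := by
  have h := ((hasDerivAt_sin_half t).cpow_nat a).mul ((hasDerivAt_cos_half t).cpow_nat b)
  convert h using 1
  · rfl
  · rfl
  simp only [Pc1, Pc]; ring

lemma hasDerivAt_Pc1 (a b : ℕ) (t : ℝ) : HasDerivAt (fun t => Pc1 a b t) (Pc2 a b t) t := by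
  have h := (((hasDerivAt_Pc (a-1) (b+1) t).const_mul (a:ℂ)).sub
    ((hasDerivAt_Pc (a+1) (b-1) t).const_mul (b:ℂ))).div_const 2
  exact h

lemma key' (a b : ℕ) (M S0 α β γ : ℂ)
    (hα : 4*α = (M+S0)^2 - (a:ℂ)^2)
    (hβ : 2*β = (a:ℂ)*(b:ℂ) + (a:ℂ) + (b:ℂ) + ((M+S0)^2+(M-S0)^2)/2)
    (hγ : 4*γ = (M-S0)^2 - (b:ℂ)^2)
    (hα' : α = 0 ∨ 2 ≤ a) (hγ' : γ = 0 ∨ 2 ≤ b) (t : ℝ) :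
    (2*(Real.sin (t/2):ℂ)*(Real.cos (t/2):ℂ))^2 * (-(Pc2 a b t))
      - (2*(Real.sin (t/2):ℂ)*(Real.cos (t/2):ℂ))*((Real.cos (t/2):ℂ)^2-(Real.sin (t/2):ℂ)^2) * Pc1 a b t
      + (((M+S0)^2+(M-S0)^2)/2 + ((M+S0)^2-(M-S0)^2)/2*((Real.cos (t/2):ℂ)^2-(Real.sin (t/2):ℂ)^2)) * Pc a b t
    = (2*(Real.sin (t/2):ℂ)*(Real.cos (t/2):ℂ))^2 * (α * Pc (a-2) (b+2) t + β * Pc a b t + γ * Pc (a+2) (b-2) t) := by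
  set S := ((Real.sin (t/2) : ℝ) : ℂ) with hSdef
  set C := ((Real.cos (t/2) : ℝ) : ℂ) with hCdef
  have hsc : S^2 + C^2 = 1 := by
    rw [hSdef, hCdef]
    have := Real.sin_sq_add_cos_sq (t/2)
    exact_mod_cast congrArg (Complex.ofReal) this
  rcases Nat.lt_or_ge a 2 with ha | ha
  · have hα0 : α = 0 := hα'.resolve_right (by omega)
    rcases Nat.lt_or_ge b 2 with hb | hb
    · have hγ0 : γ = 0 := hγ'.resolve_right (by omega)
      interval_cases a <;> interval_cases b
      · -- a=0 b=0
        have hu : (M+S0)^2 = 0 := by rw [hα0] at hα; push_cast at hα; linear_combination -hα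
        have hv : (M-S0)^2 = 0 := by rw [hγ0] at hγ; push_cast at hγ; linear_combination -hγ
        norm_num only [Pc2, Pc1, Pc]
        rw [← hSdef, ← hCdef]
        push_cast [-Complex.ofReal_sin, -Complex.ofReal_cos] at hα hβ hγ ⊢
        linear_combination ((-1)*S^2*C^4) * hα + ((-2)*S^2*C^2) * hβ + ((-1)*S^4*C^2) * hγ + ((-1/2)*(M-S0)^2 + (1/2)*(M+S0)^2 + (-1)*S^2*(M-S0)^2 + (-2)*S^2*(M+S0)^2 + (-1)*S^2*C^2*(M+S0)^2 + (-1)*S^4*(M-S0)^2 + S^4*(M+S0)^2) * hsc + (1 + (-3)*S^2 + 3*S^4 + (-1)*S^6) * hu + (S^6) * hv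
      · -- a=0 b=1
        have hu : (M+S0)^2 = 0 := by rw [hα0] at hα; push_cast at hα; linear_combination -hα
        have hv : (M-S0)^2 = 1 := by rw [hγ0] at hγ; push_cast at hγ; linear_combination -hγ
        norm_num only [Pc2, Pc1, Pc]
        rw [← hSdef, ← hCdef]
        push_cast [-Complex.ofReal_sin, -Complex.ofReal_cos] at hα hβ hγ ⊢
        linear_combination ((-1)*S^2*C^5) * hα + ((-2)*S^2*C^3) * hβ + ((-1)*S^4*C^2) * hγ + ((-1/2)*C*(M-S0)^2 + (1/2)*C*(M+S0)^2 + (-1)*S^2*C*(M-S0)^2 + (-2)*S^2*C*(M+S0)^2 + (-1)*S^2*C^3*(M+S0)^2 + S^4 + (-1)*S^4*(M-S0)^2 + S^4*C*(M+S0)^2) * hsc + (C + (-3)*S^2*C + 3*S^4*C + (-1)*S^6*C) * hu + ((-1)*S^4 + S^4*C + S^6) * hv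
      · -- a=1 b=0
        have hu : (M+S0)^2 = 1 := by rw [hα0] at hα; push_cast at hα; linear_combination -hα
        have hv : (M-S0)^2 = 0 := by rw [hγ0] at hγ; push_cast at hγ; linear_combination -hγ
        norm_num only [Pc2, Pc1, Pc]
        rw [← hSdef, ← hCdef]
        push_cast [-Complex.ofReal_sin, -Complex.ofReal_cos] at hα hβ hγ ⊢
        linear_combination ((-1)*S^2*C^4) * hα + ((-2)*S^3*C^2) * hβ + ((-1)*S^5*C^2) * hγ + ((-1)*S + (-1/2)*S*(M-S0)^2 + (1/2)*S*(M+S0)^2 + (-1)*S*C^2 + S^2 + (-1)*S^2*(M+S0)^2 + S^2*C^2 + (-1)*S^2*C^2*(M+S0)^2 + S^3 + (-1)*S^3*(M-S0)^2 + (-1)*S^3*(M+S0)^2 + (-1)*S^4 + S^4*(M+S0)^2 + (-1)*S^5*(M-S0)^2) * hsc + (S + (-1)*S^2 + (-2)*S^3 + 2*S^4 + S^5 + (-1)*S^6) * hu + (S^7) * hv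
      · -- a=1 b=1
        have hu : (M+S0)^2 = 1 := by rw [hα0] at hα; push_cast at hα; linear_combination -hα
        have hv : (M-S0)^2 = 1 := by rw [hγ0] at hγ; push_cast at hγ; linear_combination -hγ
        norm_num only [Pc2, Pc1, Pc]
        rw [← hSdef, ← hCdef]
        push_cast [-Complex.ofReal_sin, -Complex.ofReal_cos] at hα hβ hγ ⊢
        linear_combination ((-1)*S^2*C^5) * hα + ((-2)*S^3*C^3) * hβ + ((-1)*S^5*C^2) * hγ + ((-1)*S*C + (-1/2)*S*C*(M-S0)^2 + (1/2)*S*C*(M+S0)^2 + (-1)*S*C^3 + S^2*C + (-1)*S^2*C*(M+S0)^2 + S^2*C^3 + (-1)*S^2*C^3*(M+S0)^2 + S^3*C + (-1)*S^3*C*(M-S0)^2 + (-1)*S^3*C*(M+S0)^2 + (-1)*S^4*C + S^4*C*(M+S0)^2 + S^5 + (-1)*S^5*(M-S0)^2) * hsc + (S*C + (-1)*S^2*C + (-2)*S^3*C + 2*S^4*C + S^5*C + (-1)*S^6*C) * hu + ((-1)*S^5 + S^5*C + S^7) * hv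
    · obtain ⟨b2, rfl⟩ : ∃ k, b = k + 2 := ⟨b - 2, by omega⟩
      interval_cases a
      · have hu : (M+S0)^2 = 0 := by rw [hα0] at hα; push_cast at hα; linear_combination -hα
        norm_num only [Pc2, Pc1, Pc, Nat.add_sub_cancel,
          show ∀ k:ℕ, k+2-1 = k+1 from fun _ => rfl]
        rw [← hSdef, ← hCdef]
        push_cast [-Complex.ofReal_sin, -Complex.ofReal_cos] at hα hβ hγ ⊢
        linear_combination ((-1)*S^2*C^6*C^b2) * hα + ((-2)*S^2*C^4*C^b2) * hβ + ((-1)*S^4*C^2*C^b2) * hγ + ((M+S0)^2*C^b2 + (-1/2)*C^2*(M-S0)^2*C^b2 + (1/2)*C^2*(M+S0)^2*C^b2 + (-3)*S^2*(M+S0)^2*C^b2 + (-1)*S^2*C^2*(M-S0)^2*C^b2 + (-2)*S^2*C^2*(M+S0)^2*C^b2 + (-1)*S^2*C^4*(M+S0)^2*C^b2 + 3*S^4*(M+S0)^2*C^b2 + S^4*C^2*(M+S0)^2*C^b2 + (-1)*S^6*(M+S0)^2*C^b2) * hsc + (C^b2 + (-4)*S^2*C^b2 + 6*S^4*C^b2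 + (-4)*S^6*C^b2 + S^8*C^b2) * hu
      · have hu : (M+S0)^2 = 1 := by rw [hα0] at hα; push_cast at hα; linear_combination -hα
        norm_num only [Pc2, Pc1, Pc, Nat.add_sub_cancel,
          show ∀ k:ℕ, k+2-1 = k+1 from fun _ => rfl]
        rw [← hSdef, ← hCdef]
        push_cast [-Complex.ofReal_sin, -Complex.ofReal_cos] at hα hβ hγ ⊢
        linear_combination ((-1)*S^2*C^6*C^b2) * hα + ((-2)*S^3*C^4*C^b2) * hβ + ((-1)*S^5*C^2*C^b2) * hγ + ((-1)*S*C^b2 + S*(M+S0)^2*C^b2 + (-1)*S*C^2*C^b2 + (-1/2)*S*C^2*(M-S0)^2*C^b2 + (1/2)*S*C^2*(M+S0)^2*C^b2 + (-1)*S*C^4*C^b2 + S^2*C^b2 + (-1)*S^2*(M+S0)^2*C^b2 + S^2*C^2*C^b2 + (-1)*S^2*C^2*(M+S0)^2*C^b2 + S^2*C^4*C^b2 + (-1)*S^2*C^4*(M+S0)^2*C^b2 + 2*S^3*C^b2 + (-2)*S^3*(M+S0)^2*C^b2 + S^3*C^2*C^b2 + (-1)*S^3*C^2*(M-S0)^2*C^b2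 + (-1)*S^3*C^2*(M+S0)^2*C^b2 + (-2)*S^4*C^b2 + 2*S^4*(M+S0)^2*C^b2 + (-1)*S^4*C^2*C^b2 + S^4*C^2*(M+S0)^2*C^b2 + (-1)*S^5*C^b2 + S^5*(M+S0)^2*C^b2 + S^6*C^b2 + (-1)*S^6*(M+S0)^2*C^b2) * hsc + (S*C^b2 + (-1)*S^2*C^b2 + (-3)*S^3*C^b2 + 3*S^4*C^b2 + 3*S^5*C^b2 + (-3)*S^6*C^b2 + (-1)*S^7*C^b2 + S^8*C^b2) * hu
  · obtain ⟨a2, rfl⟩ : ∃ k, a = k + 2 := ⟨a - 2, by omega⟩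
    rcases Nat.lt_or_ge b 2 with hb | hb
    · have hγ0 : γ = 0 := hγ'.resolve_right (by omega)
      interval_cases b
      · have hv : (M-S0)^2 = 0 := by rw [hγ0] at hγ; push_cast at hγ; linear_combination -hγ
        norm_num only [Pc2, Pc1, Pc, Nat.add_sub_cancel,
          show ∀ k:ℕ, k+2-1 = k+1 from fun _ => rfl]
        rw [← hSdef, ← hCdef]
        push_cast [-Complex.ofReal_sin, -Complex.ofReal_cos] at hα hβ hγ ⊢
        linear_combination ((-1)*S^2*C^4*S^a2) * hα + ((-2)*S^4*C^2*S^a2) * hβ + ((-1)*S^6*C^2*S^a2) * hγ + ((-1/2)*S^2*(M-S0)^2*S^a2 + (-1/2)*S^2*(M+S0)^2*S^a2 + (-1)*S^2*C^2*(M+S0)^2*S^a2 + (-1)*S^4*(M-S0)^2*S^a2 + (-1)*S^6*(M-S0)^2*S^a2) * hsc + (S^8*S^a2) * hv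
      · have hv : (M-S0)^2 = 1 := by rw [hγ0] at hγ; push_cast at hγ; linear_combination -hγ
        norm_num only [Pc2, Pc1, Pc, Nat.add_sub_cancel,
          show ∀ k:ℕ, k+2-1 = k+1 from fun _ => rfl]
        rw [← hSdef, ← hCdef]
        push_cast [-Complex.ofReal_sin, -Complex.ofReal_cos] at hα hβ hγ ⊢
        linear_combination ((-1)*S^2*C^5*S^a2) * hα + ((-2)*S^4*C^3*S^a2) * hβ + ((-1)*S^6*C^2*S^a2) * hγ + ((-1/2)*S^2*C*(M-S0)^2*S^a2 + (-1/2)*S^2*C*(M+S0)^2*S^a2 + (-1)*S^2*C^3*(M+S0)^2*S^a2 + (-1)*S^4*C*(M-S0)^2*S^a2 + S^6*S^a2 + (-1)*S^6*(M-S0)^2*S^a2) * hsc + ((-1)*S^6*S^a2 + S^6*C*S^a2 + S^8*S^a2) * hv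
    · obtain ⟨b2, rfl⟩ : ∃ k, b = k + 2 := ⟨b - 2, by omega⟩
      norm_num only [Pc2, Pc1, Pc, Nat.add_sub_cancel,
        show ∀ k:ℕ, k+2-1 = k+1 from fun _ => rfl]
      rw [← hSdef, ← hCdef]
      push_cast [-Complex.ofReal_sin, -Complex.ofReal_cos] at hα hβ hγ ⊢
      linear_combination ((-1)*S^2*C^6*S^a2*C^b2) * hα + ((-2)*S^4*C^4*S^a2*C^b2) * hβ + ((-1)*S^6*C^2*S^a2*C^b2) * hγ + ((-1/2)*S^2*C^2*(M-S0)^2*S^a2*C^b2 + (-1/2)*S^2*C^2*(M+S0)^2*S^a2*C^b2 + (-1)*S^2*C^4*(M+S0)^2*S^a2*C^b2 + (-1)*S^4*C^2*(M-S0)^2*S^a2*C^b2) * hsc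

/-! ### Global objects -/

noncomputable def Cst (s j m : ℤ) : ℂ :=
  (Real.sqrt ((((j + m).toNat.factorial : ℝ) * ((j - m).toNat.factorial : ℝ) *
        ((2 * j + 1 : ℤ) : ℝ)) /
      (4 * Real.pi * ((j + s).toNat.factorial : ℝ) * ((j - s).toNat.factorial : ℝ))) : ℂ)

def bqn (s m : ℤ) (q : ℤ) : ℕ := (2*q + s - m).toNat
def aqn (s j m : ℤ) (q : ℤ) : ℕ := (2*j).toNat - bqn s m q

noncomputable def Aq (s j m : ℤ) (q : ℤ) : ℂ :=
  (((j - s).toNat.choose q.toNat : ℕ) : ℂ) *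
    (((j + s).toNat.choose (q + s - m).toNat : ℕ) : ℂ) * (-1 : ℂ) ^ (j - q - s)

noncomputable def G (s j m : ℤ) (t : ℝ) : ℂ :=
  ∑ q ∈ Finset.Icc (max 0 (m - s)) (min (j - s) (j + m)),
    Aq s j m q * Pc (aqn s j m q) (bqn s m q) t

noncomputable def G1 (s j m : ℤ) (t : ℝ) : ℂ :=
  ∑ q ∈ Finset.Icc (max 0 (m - s)) (min (j - s) (j + m)),
    Aq s j m q * Pc1 (aqn s j m q) (bqn s m q) t

noncomputable def G2 (s j m : ℤ) (t : ℝ) : ℂ :=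
  ∑ q ∈ Finset.Icc (max 0 (m - s)) (min (j - s) (j + m)),
    Aq s j m q * Pc2 (aqn s j m q) (bqn s m q) t

lemma hasDerivAt_G (s j m : ℤ) (t : ℝ) : HasDerivAt (fun t => G s j m t) (G1 s j m t) t := by
  unfold G G1
  exact HasDerivAt.fun_sum fun q _ => (hasDerivAt_Pc _ _ t).const_mul _

lemma hasDerivAt_G1 (s j m : ℤ) (t : ℝ) : HasDerivAt (fun t => G1 s j m t) (G2 s j m t) t := by
  unfold G1 G2
  exact HasDerivAt.fun_sum fun q _ => (hasDerivAt_Pc1 _ _ t).const_mul _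

/-- swsh in factored form on `(0,π)`. -/
lemma swsh_eq (s j m : ℤ) (hm : |m| ≤ j) {t : ℝ} (ht : t ∈ Set.Ioo 0 Real.pi) (φ : ℝ) :
    swsh s j m t φ = Cst s j m * Complex.exp (Complex.I * (m:ℂ) * (φ:ℂ)) * G s j m t := by
  have ht2 : 0 < t/2 ∧ t/2 < Real.pi/2 := by constructor <;> [linarith [ht.1]; linarith [ht.2]]
  have hSpos : 0 < Real.sin (t/2) :=
    Real.sin_pos_of_pos_of_lt_pi ht2.1 (by linarith [Real.pi_pos, ht2.2])
  have hS : ((Real.sin (t/2) : ℝ) : ℂ) ≠ 0 := by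
    simpa using Complex.ofReal_ne_zero.mpr (ne_of_gt hSpos)
  rw [swsh, if_neg (not_lt.mpr hm)]
  rw [Cst, G, Finset.mul_sum, Finset.mul_sum]
  apply Finset.sum_congr rfl
  intro q hq
  rw [Finset.mem_Icc] at hq
  have hble : bqn s m q ≤ (2*j).toNat := by
    have h1 : 2*q + s - m ≤ 2*j := by omega
    unfold bqn; omega
  have hpow : (Real.sin (t/2) : ℂ) ^ (2*j).toNat *
      (((Real.cos (t/2) / Real.sin (t/2) : ℝ)) : ℂ) ^ (2*q+s-m).toNat
      = Pc (aqn s j m q) (bqn s m q) t := by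
    rw [Pc]
    have : (((Real.cos (t/2) / Real.sin (t/2) : ℝ)) : ℂ)
        = (Real.cos (t/2) : ℂ) / (Real.sin (t/2) : ℂ) := by push_cast; ring
    rw [this, div_pow]
    rw [show (2*j).toNat = aqn s j m q + bqn s m q by unfold aqn; omega]
    rw [pow_add]
    rw [show (2*q+s-m).toNat = bqn s m q from rfl]
    have hS2 : Complex.sin ((t:ℂ)/2) ≠ 0 := by
      rw [show ((t:ℂ))/2 = ((t/2 : ℝ) : ℂ) by push_cast; ring, ← Complex.ofReal_sin]
      exact hS
    field_simp

  rw [Aq]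
  rw [← hpow]
  ring


/-! ### Combinatorial shift identity -/

lemma comb (s j m q : ℤ) (hq0 : 0 ≤ q) (hqsm : m - s ≤ q)
    (hq1 : q + 1 ≤ j - s) (hq2 : q + 1 ≤ j + m) :
    Aq s j m q * ((-((j-q-s)*(j-q+m)) : ℤ):ℂ)
      = Aq s j m (q+1) * (((q+1)*(q+1+s-m) : ℤ):ℂ) := by
  set n1 := (j - s).toNat with hn1
  set n2 := (j + s).toNat with hn2
  set k := q.toNat with hk
  set r := (q + s - m).toNat with hr
  have hk1 : (q+1).toNat = k + 1 := by omega
  have hr1 : (q+1+s-m).toNat = r + 1 := by omega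
  have hx : ((j - q - s : ℤ) : ℂ) = ((n1 - k : ℕ) : ℂ) := by
    have h : ((n1 - k : ℕ) : ℤ) = j - q - s := by omega
    exact_mod_cast h.symm
  have hy : ((j - q + m : ℤ) : ℂ) = ((n2 - r : ℕ) : ℂ) := by
    have h : ((n2 - r : ℕ) : ℤ) = j - q + m := by omega
    exact_mod_cast h.symm
  have hq1C : ((q + 1 : ℤ) : ℂ) = (k : ℂ) + 1 := by
    have h : ((k + 1 : ℕ) : ℤ) = q + 1 := by omega
    exact_mod_cast h.symm
  have hr1C : ((q + 1 + s - m : ℤ) : ℂ) = (r : ℂ) + 1 := by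
    have h : ((r + 1 : ℕ) : ℤ) = q + 1 + s - m := by omega
    exact_mod_cast h.symm
  have e1 : (n1.choose (k+1) : ℂ) * ((k:ℂ)+1) = (n1.choose k : ℂ) * ((n1 - k : ℕ) : ℂ) := by
    exact_mod_cast congrArg (fun n : ℕ => (n : ℂ)) (Nat.choose_succ_right_eq n1 k)
  have e2 : (n2.choose (r+1) : ℂ) * ((r:ℂ)+1) = (n2.choose r : ℂ) * ((n2 - r : ℕ) : ℂ) := by
    exact_mod_cast congrArg (fun n : ℕ => (n : ℂ)) (Nat.choose_succ_right_eq n2 r)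
  unfold Aq
  set σ := (-1 : ℂ) ^ (j - q - s) with hσdef
  have hσ : (-1 : ℂ) ^ (j - (q+1) - s) = -σ := by
    rw [hσdef, show j - (q+1) - s = (j - q - s) + (-1) by ring,
      zpow_add₀ (by norm_num : (-1:ℂ) ≠ 0)]
    norm_num
  rw [hk1, hr1, hσ]
  rw [show ((-((j-q-s)*(j-q+m)) : ℤ):ℂ) = -(((j-q-s :ℤ):ℂ) * ((j-q+m:ℤ):ℂ)) by push_cast; ring]
  rw [hx, hy]
  rw [show (((q+1)*(q+1+s-m) : ℤ):ℂ) = ((q+1:ℤ):ℂ) * ((q+1+s-m:ℤ):ℂ) by push_cast; ring,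
    hq1C, hr1C]
  linear_combination σ * (n2.choose (r+1) : ℂ) * ((r:ℂ)+1) * e1
    + σ * (n1.choose k : ℂ) * ((n1 - k : ℕ) : ℂ) * e2

/-! ### Sum shift lemmas -/

lemma sum_shift (L H : ℤ) (f : ℤ → ℂ) :
    ∑ q ∈ Finset.Icc L (H-1), f (q+1) = ∑ q ∈ Finset.Icc (L+1) H, f q := by
  rw [show Finset.Icc (L+1) H = (Finset.Icc L (H-1)).map (addRightEmbedding 1) by
    rw [Finset.map_add_right_Icc]; congr 1; ring, Finset.sum_map]
  simp only [addRightEmbedding_apply]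

lemma SA (s j m : ℤ) (hs : |s| ≤ j) (hm : |m| ≤ j) (t : ℝ) :
    ∑ q ∈ Finset.Icc (max 0 (m-s)) (min (j-s) (j+m)),
      Aq s j m q * ((-((j-q-s)*(j-q+m)) : ℤ):ℂ) * Pc (aqn s j m q - 2) (bqn s m q + 2) t
    = ∑ q ∈ Finset.Icc (max 0 (m-s)) (min (j-s) (j+m)),
      Aq s j m q * ((q*(q+s-m) : ℤ):ℂ) * Pc (aqn s j m q) (bqn s m q) t := by
  rw [abs_le] at hs hm
  have hLH : max 0 (m-s) ≤ min (j-s) (j+m) := by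
    rcases max_cases 0 (m-s) with ⟨h1,h2⟩|⟨h1,h2⟩ <;> rcases min_cases (j-s) (j+m) with ⟨h3,h4⟩|⟨h3,h4⟩ <;> omega
  set L := max 0 (m-s) with hLdef
  set H := min (j-s) (j+m) with hHdef
  have hL0 : 0 ≤ L := le_max_left _ _
  have hLs : m - s ≤ L := le_max_right _ _
  have hLc : L = 0 ∨ L = m - s := by rcases max_cases 0 (m-s) with ⟨h1,_⟩|⟨h1,_⟩ <;> [left; right] <;> exact h1
  have hH1 : H ≤ j - s := min_le_left _ _
  have hH2 : H ≤ j + m := min_le_right _ _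
  have hHc : H = j - s ∨ H = j + m := by rcases min_cases (j-s) (j+m) with ⟨h1,_⟩|⟨h1,_⟩ <;> [left; right] <;> exact h1
  have hIccH : Finset.Icc L H = insert H (Finset.Icc L (H-1)) := by
    ext x; simp only [Finset.mem_Icc, Finset.mem_insert]; omega
  have hIccL : Finset.Icc L H = insert L (Finset.Icc (L+1) H) := by
    ext x; simp only [Finset.mem_Icc, Finset.mem_insert]; omega
  calc ∑ q ∈ Finset.Icc L H,
      Aq s j m q * ((-((j-q-s)*(j-q+m)) : ℤ):ℂ) * Pc (aqn s j m q - 2) (bqn s m q + 2) t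
      = ∑ q ∈ Finset.Icc L (H-1),
        Aq s j m q * ((-((j-q-s)*(j-q+m)) : ℤ):ℂ) * Pc (aqn s j m q - 2) (bqn s m q + 2) t := by
        rw [hIccH, Finset.sum_insert (by simp only [Finset.mem_Icc]; omega)]
        have hz : -((j-H-s)*(j-H+m)) = 0 := by rcases hHc with h|h <;> rw [h] <;> ring
        rw [hz]
        norm_num
    _ = ∑ q ∈ Finset.Icc L (H-1),
        Aq s j m (q+1) * (((q+1)*(q+1+s-m) : ℤ):ℂ) * Pc (aqn s j m (q+1)) (bqn s m (q+1)) t := by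
        apply Finset.sum_congr rfl
        intro q hq
        rw [Finset.mem_Icc] at hq
        have hb1 : bqn s m (q+1) = bqn s m q + 2 := by unfold bqn; omega
        have ha1 : aqn s j m (q+1) = aqn s j m q - 2 := by unfold aqn bqn; omega
        rw [hb1, ha1, comb s j m q (by omega) (by omega) (by omega) (by omega)]
    _ = ∑ q ∈ Finset.Icc (L+1) H,
        Aq s j m q * ((q*(q+s-m) : ℤ):ℂ) * Pc (aqn s j m q) (bqn s m q) t := by
        exact sum_shift L H (fun q => Aq s j m q * ((q*(q+s-m) : ℤ):ℂ) * Pc (aqn s j m q) (bqn s m q) t)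
    _ = ∑ q ∈ Finset.Icc L H,
        Aq s j m q * ((q*(q+s-m) : ℤ):ℂ) * Pc (aqn s j m q) (bqn s m q) t := by
        rw [hIccL, Finset.sum_insert (by simp only [Finset.mem_Icc]; omega)]
        have hz : L*(L+s-m) = 0 := by rcases hLc with h|h <;> rw [h] <;> ring
        rw [hz]
        norm_num

lemma SG (s j m : ℤ) (hs : |s| ≤ j) (hm : |m| ≤ j) (t : ℝ) :
    ∑ q ∈ Finset.Icc (max 0 (m-s)) (min (j-s) (j+m)),
      Aq s j m q * ((-(q*(q+s-m)) : ℤ):ℂ) * Pc (aqn s j m q + 2) (bqn s m q - 2) t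
    = ∑ q ∈ Finset.Icc (max 0 (m-s)) (min (j-s) (j+m)),
      Aq s j m q * (((j-q-s)*(j-q+m) : ℤ):ℂ) * Pc (aqn s j m q) (bqn s m q) t := by
  rw [abs_le] at hs hm
  have hLH : max 0 (m-s) ≤ min (j-s) (j+m) := by
    rcases max_cases 0 (m-s) with ⟨h1,h2⟩|⟨h1,h2⟩ <;> rcases min_cases (j-s) (j+m) with ⟨h3,h4⟩|⟨h3,h4⟩ <;> omega
  set L := max 0 (m-s) with hLdef
  set H := min (j-s) (j+m) with hHdef
  have hL0 : 0 ≤ L := le_max_left _ _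
  have hLs : m - s ≤ L := le_max_right _ _
  have hLc : L = 0 ∨ L = m - s := by rcases max_cases 0 (m-s) with ⟨h1,_⟩|⟨h1,_⟩ <;> [left; right] <;> exact h1
  have hH1 : H ≤ j - s := min_le_left _ _
  have hH2 : H ≤ j + m := min_le_right _ _
  have hHc : H = j - s ∨ H = j + m := by rcases min_cases (j-s) (j+m) with ⟨h1,_⟩|⟨h1,_⟩ <;> [left; right] <;> exact h1
  have hIccH : Finset.Icc L H = insert H (Finset.Icc L (H-1)) := by
    ext x; simp only [Finset.mem_Icc, Finset.mem_insert]; omega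
  have hIccL : Finset.Icc L H = insert L (Finset.Icc (L+1) H) := by
    ext x; simp only [Finset.mem_Icc, Finset.mem_insert]; omega
  calc ∑ q ∈ Finset.Icc L H,
      Aq s j m q * ((-(q*(q+s-m)) : ℤ):ℂ) * Pc (aqn s j m q + 2) (bqn s m q - 2) t
      = ∑ q ∈ Finset.Icc (L+1) H,
        Aq s j m q * ((-(q*(q+s-m)) : ℤ):ℂ) * Pc (aqn s j m q + 2) (bqn s m q - 2) t := by
        rw [hIccL, Finset.sum_insert (by simp only [Finset.mem_Icc]; omega)]
        have hz : -(L*(L+s-m)) = 0 := by rcases hLc with h|h <;> rw [h] <;> ring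
        rw [hz]
        norm_num
    _ = ∑ q ∈ Finset.Icc L (H-1),
        Aq s j m (q+1) * ((-((q+1)*((q+1)+s-m)) : ℤ):ℂ) * Pc (aqn s j m (q+1) + 2) (bqn s m (q+1) - 2) t := by
        exact (sum_shift L H (fun q => Aq s j m q * ((-(q*(q+s-m)) : ℤ):ℂ) * Pc (aqn s j m q + 2) (bqn s m q - 2) t)).symm
    _ = ∑ q ∈ Finset.Icc L (H-1),
        Aq s j m q * (((j-q-s)*(j-q+m) : ℤ):ℂ) * Pc (aqn s j m q) (bqn s m q) t := by
        apply Finset.sum_congr rfl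
        intro q hq
        rw [Finset.mem_Icc] at hq
        have hb1 : bqn s m (q+1) - 2 = bqn s m q := by unfold bqn; omega
        have ha1 : aqn s j m (q+1) + 2 = aqn s j m q := by unfold aqn bqn; omega
        rw [hb1, ha1]
        have hc := comb s j m q (by omega) (by omega) (by omega) (by omega)
        have hswap : Aq s j m (q+1) * ((-((q+1)*((q+1)+s-m)) : ℤ):ℂ)
            = Aq s j m q * (((j-q-s)*(j-q+m) : ℤ):ℂ) := by
          have h1 : ((-((q+1)*((q+1)+s-m)) : ℤ):ℂ) = -(((q+1)*(q+1+s-m) : ℤ):ℂ) := by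
            push_cast; ring
          have h2 : (((j-q-s)*(j-q+m) : ℤ):ℂ) = -((-((j-q-s)*(j-q+m)) : ℤ):ℂ) := by
            push_cast; ring
          rw [h1, h2]
          linear_combination hc
        linear_combination hswap * Pc (aqn s j m q) (bqn s m q) t
    _ = ∑ q ∈ Finset.Icc L H,
        Aq s j m q * (((j-q-s)*(j-q+m) : ℤ):ℂ) * Pc (aqn s j m q) (bqn s m q) t := by
        rw [hIccH, Finset.sum_insert (by simp only [Finset.mem_Icc]; omega)]
        have hz : (j-H-s)*(j-H+m) = 0 := by rcases hHc with h|h <;> rw [h] <;> ring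
        rw [hz]
        norm_num
/-- The heart: the eigenvalue identity for `G`. -/
lemma Gmain (s j m : ℤ) (hs : |s| ≤ j) (hm : |m| ≤ j) {t : ℝ} (ht : t ∈ Set.Ioo 0 Real.pi) :
    -(G2 s j m t) - ((Real.cos t : ℂ)/(Real.sin t : ℂ)) * G1 s j m t
      + (((m:ℂ)^2 + (s:ℂ)^2 + 2*(m:ℂ)*(s:ℂ)*(Real.cos t : ℂ)) / (Real.sin t : ℂ)^2)
          * G s j m t

    = ((j:ℂ)*((j:ℂ)+1)) * G s j m t := by
  obtain ⟨ht1, ht2⟩ := ht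
  have hs' := hs
  have hm' := hm
  rw [abs_le] at hs' hm'
  have hsinpos : 0 < Real.sin t := Real.sin_pos_of_pos_of_lt_pi ht1 ht2
  have hsinne : ((Real.sin t : ℝ):ℂ) ≠ 0 := Complex.ofReal_ne_zero.mpr hsinpos.ne'
  have hsin2 : ((Real.sin t : ℝ):ℂ) = 2 * (Real.sin (t/2):ℂ) * (Real.cos (t/2):ℂ) := by
    have h := Real.sin_two_mul (t/2)
    rw [show 2*(t/2) = t by ring] at h
    rw [h]
    push_cast [-Complex.ofReal_sin, -Complex.ofReal_cos]
    ring
  have hcos2 : ((Real.cos t : ℝ):ℂ) = (Real.cos (t/2):ℂ)^2 - (Real.sin (t/2):ℂ)^2 := by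
    have h := Real.cos_two_mul (t/2)
    rw [show 2*(t/2) = t by ring] at h
    have hscC : (Real.sin (t/2):ℂ)^2 + (Real.cos (t/2):ℂ)^2 = 1 := by
      exact_mod_cast congrArg (Complex.ofReal) (Real.sin_sq_add_cos_sq (t/2))
    rw [h]
    push_cast [-Complex.ofReal_sin, -Complex.ofReal_cos]
    linear_combination hscC
  apply mul_left_cancel₀ (pow_ne_zero 2 hsinne)
  have hFq : ∀ q ∈ Finset.Icc (max 0 (m-s)) (min (j-s) (j+m)),
      ((bqn s m q : ℕ):ℂ) = 2*(q:ℂ)+(s:ℂ)-(m:ℂ) ∧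
      ((aqn s j m q : ℕ):ℂ) = 2*(j:ℂ) - (2*(q:ℂ)+(s:ℂ)-(m:ℂ)) := by
    intro q hq
    rw [Finset.mem_Icc] at hq
    have hq1 : 0 ≤ q := le_trans (le_max_left 0 (m-s)) hq.1
    have hq2 : m - s ≤ q := le_trans (le_max_right 0 (m-s)) hq.1
    have hq3 : q ≤ j-s := le_trans hq.2 (min_le_left _ _)
    have hq4 : q ≤ j+m := le_trans hq.2 (min_le_right _ _)
    have hbZ : (bqn s m q : ℤ) = 2*q+s-m := by unfold bqn; omega
    have haZ : (aqn s j m q : ℤ) = 2*j - (2*q+s-m) := by unfold aqn bqn; omega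
    constructor
    · exact_mod_cast congrArg (fun z:ℤ => (z:ℂ)) hbZ
    · exact_mod_cast congrArg (fun z:ℤ => (z:ℂ)) haZ
  set V : ℂ := ((m:ℂ)^2 + (s:ℂ)^2 + 2*(m:ℂ)*(s:ℂ)*(Real.cos t : ℂ)) with hVdef
  calc ((Real.sin t:ℂ))^2 * (-(G2 s j m t) - ((Real.cos t : ℂ)/(Real.sin t : ℂ)) * G1 s j m t
        + (V / (Real.sin t : ℂ)^2) * G s j m t)
      = (-((Real.sin t:ℂ)^2))*G2 s j m t - ((Real.sin t:ℂ)*(Real.cos t:ℂ))*G1 s j m t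
          + V * G s j m t := by
        have hsinne' : Complex.sin (t:ℂ) ≠ 0 := by rw [← Complex.ofReal_sin]; exact hsinne
        field_simp
    _ = ∑ q ∈ Finset.Icc (max 0 (m-s)) (min (j-s) (j+m)),
        Aq s j m q * ((Real.sin t:ℂ)^2*(-(Pc2 (aqn s j m q) (bqn s m q) t))
          - (Real.sin t:ℂ)*(Real.cos t:ℂ)*Pc1 (aqn s j m q) (bqn s m q) t
          + V*Pc (aqn s j m q) (bqn s m q) t) := by
        simp only [G, G1, G2, Finset.mul_sum]
        rw [← Finset.sum_sub_distrib, ← Finset.sum_add_distrib]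
        apply Finset.sum_congr rfl
        intro q _
        ring
    _ = ∑ q ∈ Finset.Icc (max 0 (m-s)) (min (j-s) (j+m)),
        Aq s j m q * ((Real.sin t:ℂ)^2 *
          (((-((j-q-s)*(j-q+m)) : ℤ):ℂ) * Pc (aqn s j m q - 2) (bqn s m q + 2) t
            + (((aqn s j m q : ℕ):ℂ)*((bqn s m q : ℕ):ℂ) + ((aqn s j m q : ℕ):ℂ)
                + ((bqn s m q : ℕ):ℂ) + (((m:ℂ)+(s:ℂ))^2+((m:ℂ)-(s:ℂ))^2)/2)/2
                * Pc (aqn s j m q) (bqn s m q) t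
            + ((-(q*(q+s-m)) : ℤ):ℂ) * Pc (aqn s j m q + 2) (bqn s m q - 2) t)) := by
        apply Finset.sum_congr rfl
        intro q hq
        obtain ⟨hbC, haC⟩ := hFq q hq
        rw [Finset.mem_Icc] at hq
        have hq1 : 0 ≤ q := le_trans (le_max_left 0 (m-s)) hq.1
        have hq2 : m - s ≤ q := le_trans (le_max_right 0 (m-s)) hq.1
        have hq3 : q ≤ j-s := le_trans hq.2 (min_le_left _ _)
        have hq4 : q ≤ j+m := le_trans hq.2 (min_le_right _ _)
        have hα : 4*((-((j-q-s)*(j-q+m)) : ℤ):ℂ)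
            = ((m:ℂ)+(s:ℂ))^2 - ((aqn s j m q:ℕ):ℂ)^2 := by
          rw [haC]; push_cast; ring
        have hγ : 4*((-(q*(q+s-m)) : ℤ):ℂ)
            = ((m:ℂ)-(s:ℂ))^2 - ((bqn s m q:ℕ):ℂ)^2 := by
          rw [hbC]; push_cast; ring
        have hβ : 2*((((aqn s j m q : ℕ):ℂ)*((bqn s m q : ℕ):ℂ) + ((aqn s j m q : ℕ):ℂ)
                + ((bqn s m q : ℕ):ℂ) + (((m:ℂ)+(s:ℂ))^2+((m:ℂ)-(s:ℂ))^2)/2)/2)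
            = ((aqn s j m q : ℕ):ℂ)*((bqn s m q : ℕ):ℂ) + ((aqn s j m q : ℕ):ℂ)
                + ((bqn s m q : ℕ):ℂ) + (((m:ℂ)+(s:ℂ))^2+((m:ℂ)-(s:ℂ))^2)/2 := by
          ring
        have hα' : ((-((j-q-s)*(j-q+m)) : ℤ):ℂ) = 0 ∨ 2 ≤ aqn s j m q := by
          rcases Nat.lt_or_ge (aqn s j m q) 2 with h|h
          · left
            have haZ : (aqn s j m q : ℤ) = 2*j - (2*q+s-m) := by unfold aqn bqn; omega
            have hz : (-((j-q-s)*(j-q+m)) : ℤ) = 0 := by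
              have h0 : (j-q-s) = 0 ∨ (j-q+m) = 0 := by omega
              rcases h0 with h0|h0 <;> rw [h0] <;> ring
            rw [hz]
            exact Int.cast_zero
          · right; exact h
        have hγ' : ((-(q*(q+s-m)) : ℤ):ℂ) = 0 ∨ 2 ≤ bqn s m q := by
          rcases Nat.lt_or_ge (bqn s m q) 2 with h|h
          · left
            have hbZ : (bqn s m q : ℤ) = 2*q+s-m := by unfold bqn; omega
            have hz : (-(q*(q+s-m)) : ℤ) = 0 := by
              have h0 : q = 0 ∨ (q+s-m) = 0 := by omega
              rcases h0 with h0|h0 <;> rw [h0] <;> ring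
            rw [hz]
            exact Int.cast_zero
          · right; exact h
        rw [hVdef, hsin2, hcos2]
        linear_combination (Aq s j m q) * key' (aqn s j m q) (bqn s m q) (m:ℂ) (s:ℂ)
          ((-((j-q-s)*(j-q+m)) : ℤ):ℂ)
          ((((aqn s j m q : ℕ):ℂ)*((bqn s m q : ℕ):ℂ) + ((aqn s j m q : ℕ):ℂ)
                + ((bqn s m q : ℕ):ℂ) + (((m:ℂ)+(s:ℂ))^2+((m:ℂ)-(s:ℂ))^2)/2)/2)
          ((-(q*(q+s-m)) : ℤ):ℂ) hα hβ hγ hα' hγ' t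
    _ = (Real.sin t:ℂ)^2 *
        ((∑ q ∈ Finset.Icc (max 0 (m-s)) (min (j-s) (j+m)),
            Aq s j m q * ((-((j-q-s)*(j-q+m)) : ℤ):ℂ) * Pc (aqn s j m q - 2) (bqn s m q + 2) t)
          + (∑ q ∈ Finset.Icc (max 0 (m-s)) (min (j-s) (j+m)),
            Aq s j m q * ((((aqn s j m q : ℕ):ℂ)*((bqn s m q : ℕ):ℂ) + ((aqn s j m q : ℕ):ℂ)
                + ((bqn s m q : ℕ):ℂ) + (((m:ℂ)+(s:ℂ))^2+((m:ℂ)-(s:ℂ))^2)/2)/2)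
                * Pc (aqn s j m q) (bqn s m q) t)
          + (∑ q ∈ Finset.Icc (max 0 (m-s)) (min (j-s) (j+m)),
            Aq s j m q * ((-(q*(q+s-m)) : ℤ):ℂ) * Pc (aqn s j m q + 2) (bqn s m q - 2) t)) := by
        rw [mul_add, mul_add, Finset.mul_sum, Finset.mul_sum, Finset.mul_sum,
          ← Finset.sum_add_distrib, ← Finset.sum_add_distrib]
        apply Finset.sum_congr rfl
        intro q _
        ring
    _ = (Real.sin t:ℂ)^2 *
        ((∑ q ∈ Finset.Icc (max 0 (m-s)) (min (j-s) (j+m)),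
            Aq s j m q * ((q*(q+s-m) : ℤ):ℂ) * Pc (aqn s j m q) (bqn s m q) t)
          + (∑ q ∈ Finset.Icc (max 0 (m-s)) (min (j-s) (j+m)),
            Aq s j m q * ((((aqn s j m q : ℕ):ℂ)*((bqn s m q : ℕ):ℂ) + ((aqn s j m q : ℕ):ℂ)
                + ((bqn s m q : ℕ):ℂ) + (((m:ℂ)+(s:ℂ))^2+((m:ℂ)-(s:ℂ))^2)/2)/2)
                * Pc (aqn s j m q) (bqn s m q) t)
          + (∑ q ∈ Finset.Icc (max 0 (m-s)) (min (j-s) (j+m)),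
            Aq s j m q * (((j-q-s)*(j-q+m) : ℤ):ℂ) * Pc (aqn s j m q) (bqn s m q) t)) := by
        rw [SA s j m hs hm t, SG s j m hs hm t]
    _ = (Real.sin t:ℂ)^2 * (((j:ℂ)*((j:ℂ)+1)) * G s j m t) := by
        congr 1
        rw [G, Finset.mul_sum, ← Finset.sum_add_distrib, ← Finset.sum_add_distrib]
        apply Finset.sum_congr rfl
        intro q hq
        obtain ⟨hbC, haC⟩ := hFq q hq
        have hgw : ((q*(q+s-m) : ℤ):ℂ)
            + ((((aqn s j m q : ℕ):ℂ)*((bqn s m q : ℕ):ℂ) + ((aqn s j m q : ℕ):ℂ)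
                + ((bqn s m q : ℕ):ℂ) + (((m:ℂ)+(s:ℂ))^2+((m:ℂ)-(s:ℂ))^2)/2)/2)
            + (((j-q-s)*(j-q+m) : ℤ):ℂ) = (j:ℂ)*((j:ℂ)+1) := by
          rw [haC, hbC]; push_cast; ring
        linear_combination (Aq s j m q * Pc (aqn s j m q) (bqn s m q) t) * hgw


/-- The spin-weighted spherical harmonics of spin weight `−h` are eigenfunctions of the
squared total angular momentum of helicity-`h` plasma waves with eigenvalue `j(j+1)`:
`J'²_h (_{−h}Y_{jm}) = j(j+1) (_{−h}Y_{jm})` on `(0,π) × ℝ`, where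
`J'²_h = −[∂²_θ + (cosθ/sinθ)∂_θ + (1/sin²θ)∂²_φ] + (2ih cosθ/sin²θ)∂_φ + h²/sin²θ`. -/
theorem swsh_total_angular_momentum_squared_eigenfunction
    (h j m : ℤ) (hj : |h| ≤ j) (hm : |m| ≤ j)
    (θ : ℝ) (hθ : θ ∈ Set.Ioo 0 Real.pi) (φ : ℝ) :
    -(deriv (deriv (fun t => swsh (-h) j m t φ)) θ
        + ((Real.cos θ / Real.sin θ : ℝ) : ℂ) * deriv (fun t => swsh (-h) j m t φ) θ
        + ((1 / Real.sin θ ^ 2 : ℝ) : ℂ) * deriv (deriv (fun p => swsh (-h) j m θ p)) φ)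
      + 2 * Complex.I * (h : ℂ) * ((Real.cos θ / Real.sin θ ^ 2 : ℝ) : ℂ) *
          deriv (fun p => swsh (-h) j m θ p) φ
      + ((h : ℂ) ^ 2 / ((Real.sin θ ^ 2 : ℝ) : ℂ)) * swsh (-h) j m θ φ
    = ((j : ℂ) * ((j : ℂ) + 1)) * swsh (-h) j m θ φ := by
  
  have hs : |(-h)| ≤ j := by rwa [abs_neg]
  set E : ℂ := Complex.exp (Complex.I * (m:ℂ) * (φ:ℂ)) with hEdef
  set K : ℂ := Cst (-h) j m * E with hKdef
  -- θ derivatives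
  have hEq : ∀ x ∈ Set.Ioo 0 Real.pi, swsh (-h) j m x φ
      = Cst (-h) j m * Complex.exp (Complex.I*(m:ℂ)*(φ:ℂ)) * G (-h) j m x :=
    fun x hx => swsh_eq (-h) j m hm hx φ
  have d1 : ∀ x ∈ Set.Ioo 0 Real.pi,
      deriv (fun x => swsh (-h) j m x φ) x = K * G1 (-h) j m x := by
    intro x hx
    have hEvx : (fun x => swsh (-h) j m x φ) =ᶠ[nhds x]
        (fun x => K * G (-h) j m x) :=
      Filter.eventuallyEq_of_mem (isOpen_Ioo.mem_nhds hx) (fun y hy => hEq y hy)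
    rw [hEvx.deriv_eq]
    exact ((hasDerivAt_G (-h) j m x).const_mul K).deriv
  have d2 : deriv (deriv (fun x => swsh (-h) j m x φ)) θ = K * G2 (-h) j m θ := by
    have hEv2 : deriv (fun x => swsh (-h) j m x φ) =ᶠ[nhds θ]
        (fun x => K * G1 (-h) j m x) :=
      Filter.eventuallyEq_of_mem (isOpen_Ioo.mem_nhds hθ) (fun y hy => d1 y hy)
    rw [hEv2.deriv_eq]
    exact ((hasDerivAt_G1 (-h) j m θ).const_mul K).deriv
  -- φ derivatives
  have hexp : ∀ p:ℝ, HasDerivAt (fun p:ℝ => Complex.exp (Complex.I*(m:ℂ)*(p:ℂ)))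
      (Complex.I*(m:ℂ) * Complex.exp (Complex.I*(m:ℂ)*(p:ℂ))) p := by
    intro p
    have h1 : HasDerivAt (fun p:ℝ => ((p:ℝ):ℂ)) 1 p := by
      simpa using (hasDerivAt_id p).ofReal_comp
    have h2 := h1.const_mul (Complex.I*(m:ℂ))
    have h3 := h2.cexp
    simpa [mul_comm] using h3
  have hφfun : (fun p:ℝ => swsh (-h) j m θ p)
      = (fun p:ℝ => (Cst (-h) j m * G (-h) j m θ) * Complex.exp (Complex.I*(m:ℂ)*(p:ℂ))) := by
    funext p
    rw [swsh_eq (-h) j m hm hθ p]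
    ring
  have dp1 : deriv (fun p => swsh (-h) j m θ p) φ
      = (Cst (-h) j m * G (-h) j m θ) * (Complex.I*(m:ℂ)*E) := by
    rw [hφfun]
    rw [((hexp φ).const_mul (Cst (-h) j m * G (-h) j m θ)).deriv]
    try rw [hEdef]
    try ring
  have dp2 : deriv (deriv (fun p => swsh (-h) j m θ p)) φ
      = (Cst (-h) j m * G (-h) j m θ) * (Complex.I*(m:ℂ)) * (Complex.I*(m:ℂ)) * E := by
    have hd : deriv (fun p => swsh (-h) j m θ p)
        = fun p : ℝ => ((Cst (-h) j m * G (-h) j m θ) * (Complex.I*(m:ℂ)))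
            * Complex.exp (Complex.I*(m:ℂ)*(p:ℂ)) := by
      funext x
      rw [hφfun]
      rw [((hexp x).const_mul (Cst (-h) j m * G (-h) j m θ)).deriv]
      try ring
    rw [hd]
    rw [((hexp φ).const_mul ((Cst (-h) j m * G (-h) j m θ) * (Complex.I*(m:ℂ)))).deriv]
    try rw [hEdef]
    try ring
  have key := Gmain (-h) j m hs hm hθ
  rw [d2, d1 θ hθ, dp1, dp2, hEq θ hθ]
  push_cast [-Complex.ofReal_sin, -Complex.ofReal_cos] at key ⊢
  have hI : Complex.I^2 = -1 := Complex.I_sq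
  linear_combination K * key
    + (-((m:ℂ)^2/((Real.sin θ:ℂ))^2) * (K * G (-h) j m θ)
        + 2*(h:ℂ)*(m:ℂ)*((Real.cos θ:ℂ)/((Real.sin θ:ℂ))^2) * (K * G (-h) j m θ)) * hI
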